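/- Let P be a probability measure on a measurable space X, let f ∈ L²(P), and let μ > 0. Among all finite signed measures R on X with R ≪ P, R(X) = 1, and dR/dP ∈ L²(P), the functional R ↦ (1/μ)·D₂(R‖P) − ∫ f dR attains its minimum at the unique measure R* whose Radon–Nikodym density is dR*/dP = 1 + (μ/2)(f − E_P[f]), and the minimum value equals −E_P[f] − (μ/4)·Var_P[f]. -/

import Mathlib

open MeasureTheory

/-- Two functions in L² have integrable product (polarization). -/
lemma integrable_mul_of_memL2 {X : Type*} [MeasurableSpace X] {P : Measure X}
    {f g : X → ℝ} (hf : MemLp f 2 P) (hg : MemLp g 2 P) :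
    Integrable (fun x => f x * g x) P := by
  have h1 : Integrable (fun x => (f x + g x) ^ 2) P := (hf.add hg).integrable_sq
  have h2 : Integrable (fun x => f x ^ 2) P := hf.integrable_sq
  have h3 : Integrable (fun x => g x ^ 2) P := hg.integrable_sq
  have : (fun x => f x * g x)
      = fun x => (2⁻¹ : ℝ) * ((f x + g x) ^ 2 - f x ^ 2 - g x ^ 2) := by
    funext x; ring
  rw [this]
  exact (((h1.sub h2).sub h3).const_mul _)

/-- Canonical quadratic integral expansion. -/
lemma integral_quad {X : Type*} [MeasurableSpace X] (P : Measure X) [IsProbabilityMeasure P]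
    (f w : X → ℝ) (hf : MemLp f 2 P) (hw : MemLp w 2 P) (a b d e g k : ℝ) :
    ∫ x, (a + b * f x + d * (f x) ^ 2 + e * w x + g * (f x * w x) + k * (w x) ^ 2) ∂P
      = a + b * (∫ x, f x ∂P) + d * (∫ x, (f x) ^ 2 ∂P) + e * (∫ x, w x ∂P)
        + g * (∫ x, f x * w x ∂P) + k * (∫ x, (w x) ^ 2 ∂P) := by
  have hfi : Integrable f P := hf.integrable one_le_two
  have hwi : Integrable w P := hw.integrable one_le_two
  have hf2 : Integrable (fun x => f x ^ 2) P := hf.integrable_sq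
  have hw2 : Integrable (fun x => w x ^ 2) P := hw.integrable_sq
  have hfw : Integrable (fun x => f x * w x) P := integrable_mul_of_memL2 hf hw
  have h1 : Integrable (fun x => a + b * f x) P := (integrable_const a).add (hfi.const_mul b)
  have h2 : Integrable (fun x => a + b * f x + d * (f x) ^ 2) P := h1.add (hf2.const_mul d)
  have h3 : Integrable (fun x => a + b * f x + d * (f x) ^ 2 + e * w x) P :=
    h2.add (hwi.const_mul e)
  have h4 : Integrable (fun x => a + b * f x + d * (f x) ^ 2 + e * w x + g * (f x * w x)) P :=
    h3.add (hfw.const_mul g)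
  rw [integral_add h4 (hw2.const_mul k), integral_add h3 (hfw.const_mul g),
      integral_add h2 (hwi.const_mul e), integral_add h1 (hf2.const_mul d),
      integral_add (integrable_const a) (hfi.const_mul b)]
  simp [integral_const_mul]

theorem stmt_0 {X : Type*} [MeasurableSpace X] (P : Measure X) [IsProbabilityMeasure P]
    (f : X → ℝ) (hf : MemLp f 2 P) (μ : ℝ) (hμ : 0 < μ)
    (EP VarP : ℝ) (hEP : EP = ∫ x, f x ∂P) (hVarP : VarP = (∫ x, (f x) ^ 2 ∂P) - EP ^ 2)
    (wstar : X → ℝ) (hwstar : wstar = fun x => 1 + (μ / 2) * (f x - EP))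
    (J : (X → ℝ) → ℝ)
    (hJ : J = fun w => (1 / μ) * (∫ x, ((w x) ^ 2 - 1) ∂P) - ∫ x, f x * w x ∂P) :
    -- the candidate is feasible: `dR*/dP ∈ L²(P)` and `R*(X) = 1`
    (MemLp wstar 2 P ∧ (∫ x, wstar x ∂P) = 1) ∧
    -- the minimum value
    J wstar = -EP - (μ / 4) * VarP ∧
    -- minimality among all feasible densities
    (∀ w : X → ℝ, MemLp w 2 P → (∫ x, w x ∂P) = 1 → J wstar ≤ J w) ∧
    -- uniqueness: any feasible minimizer coincides (P-a.e., i.e. as a measure) with `R*`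
    (∀ w : X → ℝ, MemLp w 2 P → (∫ x, w x ∂P) = 1 → J w = J wstar → w =ᵐ[P] wstar) := by
  have hμ0 : μ ≠ 0 := ne_of_gt hμ
  have hws : MemLp wstar 2 P := by
    rw [hwstar]
    exact (memLp_const (1 : ℝ)).add ((hf.sub (memLp_const EP)).const_mul (μ / 2))
  set If := ∫ x, f x ∂P with hIf
  set I2 := ∫ x, (f x) ^ 2 ∂P with hI2
  -- ∫ wstar = 1
  have hint1 : (∫ x, wstar x ∂P) = 1 := by
    have : wstar = fun x => (1 - (μ / 2) * EP) + (μ / 2) * f x + 0 * (f x) ^ 2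
        + 0 * f x + 0 * (f x * f x) + 0 * (f x) ^ 2 := by
      rw [hwstar]; funext x; ring
    rw [this, integral_quad P f f hf hf]
    rw [hEP]; ring
  -- ∫ (wstar² - 1)
  have hint2 : (∫ x, ((wstar x) ^ 2 - 1) ∂P) = (μ / 2) ^ 2 * (I2 - EP ^ 2) := by
    have : (fun x => (wstar x) ^ 2 - 1)
        = fun x => ((μ / 2) ^ 2 * EP ^ 2 - μ * EP) + (μ - μ ^ 2 * EP / 2) * f x
          + (μ / 2) ^ 2 * (f x) ^ 2 + 0 * f x + 0 * (f x * f x) + 0 * (f x) ^ 2 := by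
      rw [hwstar]; funext x; ring
    rw [this, integral_quad P f f hf hf, ← hIf, ← hI2, hEP]; ring
  -- ∫ f * wstar
  have hint3 : (∫ x, f x * wstar x ∂P) = EP + (μ / 2) * (I2 - EP ^ 2) := by
    have : (fun x => f x * wstar x)
        = fun x => 0 + (1 - (μ / 2) * EP) * f x + (μ / 2) * (f x) ^ 2
          + 0 * f x + 0 * (f x * f x) + 0 * (f x) ^ 2 := by
      rw [hwstar]; funext x; ring
    rw [this, integral_quad P f f hf hf, ← hIf, ← hI2, hEP]; ring
  have hJws : J wstar = -EP - (μ / 4) * VarP := by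
    rw [hJ]; simp only
    rw [hint2, hint3, hVarP]
    field_simp
    ring
  -- key identity for feasible w
  have key : ∀ w : X → ℝ, MemLp w 2 P → (∫ x, w x ∂P) = 1 →
      J w = J wstar + (1 / μ) * ∫ x, (w x - wstar x) ^ 2 ∂P := by
    intro w hw hw1
    have hsq : (∫ x, (w x - wstar x) ^ 2 ∂P)
        = (1 + (μ/2)^2 * EP^2 - μ * EP) + (μ - μ^2 * EP / 2) * If + (μ/2)^2 * I2
          + (-2 + μ * EP) * (∫ x, w x ∂P) + (-μ) * (∫ x, f x * w x ∂P)
          + 1 * (∫ x, (w x) ^ 2 ∂P) := by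
      have : (fun x => (w x - wstar x) ^ 2)
          = fun x => (1 + (μ/2)^2 * EP^2 - μ * EP) + (μ - μ^2 * EP / 2) * f x
            + (μ/2)^2 * (f x) ^ 2 + (-2 + μ * EP) * w x + (-μ) * (f x * w x)
            + 1 * (w x) ^ 2 := by
        rw [hwstar]; funext x; ring
      rw [this, integral_quad P f w hf hw]
    have hw2 : (∫ x, ((w x) ^ 2 - 1) ∂P) = (∫ x, (w x) ^ 2 ∂P) - 1 := by
      rw [integral_sub hw.integrable_sq (integrable_const 1), integral_const]
      simp
    rw [hJ]; simp only
    rw [hw2, hint2, hint3, hsq, hw1, ← hEP]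
    field_simp
    ring
  refine ⟨⟨hws, hint1⟩, hJws, ?_, ?_⟩
  · intro w hw hw1
    rw [key w hw hw1]
    have h1 : 0 ≤ ∫ x, (w x - wstar x) ^ 2 ∂P :=
      integral_nonneg fun x => sq_nonneg _
    nlinarith [one_div_pos.mpr hμ]
  · intro w hw hw1 hmin
    rw [key w hw hw1] at hmin
    have h0 : (∫ x, (w x - wstar x) ^ 2 ∂P) = 0 := by
      have := one_div_pos.mpr hμ
      nlinarith
    have hint : Integrable (fun x => (w x - wstar x) ^ 2) P := (hw.sub hws).integrable_sq
    have hae : (fun x => (w x - wstar x) ^ 2) =ᵐ[P] 0 := by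
      rw [← integral_eq_zero_iff_of_nonneg (fun x => sq_nonneg _) hint]
      exact h0
    filter_upwards [hae] with x hx
    have : (w x - wstar x) ^ 2 = 0 := hx
    have := pow_eq_zero_iff (n := 2) (by norm_num) |>.mp this
    linarith [sub_eq_zero.mp this]
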